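/- Let p > 2 and μ > 1 be real numbers with μ ≥ (1/2)·(p/(p−1))^{p−1}, and let β̃ ≥ (p−1)μ. Then there is no real number τ ∈ (1, +∞) satisfying simultaneously p·τ^{2p−2} − 2β̃·τ^p = μ(2−p) and μ + β̃·τ^p − β̃·τ^{p−2} − τ^{2p−2} = 0. -/

import Mathlib

/-- Weighted AM-GM: `(p-1) x^{p-2} ≤ (p-2) x^{p-1} + 1` for `x ≥ 0`, `p > 2`. -/
lemma aux_amgm (p : ℝ) (hp : 2 < p) {x : ℝ} (hx : 0 ≤ x) :
    (p - 1) * x ^ (p - 2) ≤ (p - 2) * x ^ (p - 1) + 1 := by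
  have h1 : (0:ℝ) < p - 1 := by linarith
  have h2 : (0:ℝ) < p - 2 := by linarith
  have key := Real.geom_mean_le_arith_mean2_weighted
    (w₁ := (p - 2) / (p - 1)) (w₂ := 1 / (p - 1)) (p₁ := x ^ (p - 1)) (p₂ := 1)
    (by positivity) (by positivity) (Real.rpow_nonneg hx _) zero_le_one
    (by rw [← add_div, show p - 2 + 1 = p - 1 by ring,
          div_self (by linarith : p - 1 ≠ 0)])
  rw [Real.one_rpow, mul_one, ← Real.rpow_mul hx] at key
  have e : (p - 1) * ((p - 2) / (p - 1)) = p - 2 := by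
    rw [mul_comm, div_mul_cancel₀ _ (by linarith : p - 1 ≠ 0)]
  rw [e] at key
  have h3 := mul_le_mul_of_nonneg_left key h1.le
  have e2 : (p - 1) * ((p - 2) / (p - 1) * x ^ (p - 1) + 1 / (p - 1) * 1)
      = (p - 2) * x ^ (p - 1) + 1 := by field_simp
  rw [e2] at h3
  exact h3

/-- For `x ≥ 1`, `p > 2`: `x^{p-1} (p - (p-2)x) ≤ p x - (p-2)`. -/
lemma aux_key (p : ℝ) (hp : 2 < p) {x : ℝ} (hx : 1 ≤ x) :
    x ^ (p - 1) * (p - (p - 2) * x) ≤ p * x - (p - 2) := by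
  have hp0 : (0:ℝ) < p := by linarith
  set f : ℝ → ℝ := fun y => ((p - 2) * y ^ p - p * y ^ (p - 1)) + p * y with hf
  have hd : ∀ y : ℝ, y ≠ 0 →
      HasDerivAt f ((p - 2) * (p * y ^ (p - 1)) - p * ((p - 1) * y ^ (p - 1 - 1)) + p * 1) y := by
    intro y hy0
    exact (((Real.hasDerivAt_rpow_const (p := p) (Or.inl hy0)).const_mul (p - 2)).sub
      ((Real.hasDerivAt_rpow_const (p := p - 1) (Or.inl hy0)).const_mul p)).add
      ((hasDerivAt_id y).const_mul p)
  have hc : ContinuousOn f (Set.Ici 1) := by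
    intro y hy
    have hy0 : y ≠ 0 := by have : (1:ℝ) ≤ y := hy; positivity
    exact ((hd y hy0).differentiableAt.continuousAt).continuousWithinAt
  have hdiff : DifferentiableOn ℝ f (interior (Set.Ici 1)) := by
    rw [interior_Ici]
    intro y hy
    have hy0 : y ≠ 0 := by have : (1:ℝ) < y := hy; positivity
    exact (hd y hy0).differentiableAt.differentiableWithinAt
  have hderiv : ∀ y ∈ interior (Set.Ici (1:ℝ)), 0 ≤ deriv f y := by
    rw [interior_Ici]
    intro y hy
    have hy1 : (1:ℝ) < y := hy
    have hy0 : y ≠ 0 := by positivity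
    rw [(hd y hy0).deriv]
    have e : p - 1 - 1 = p - 2 := by ring
    rw [e]
    have hgm := aux_amgm p hp (by linarith : (0:ℝ) ≤ y)
    nlinarith [mul_le_mul_of_nonneg_left hgm hp0.le]
  have mono := monotoneOn_of_deriv_nonneg (convex_Ici (1:ℝ)) hc hdiff hderiv
  have hfx := mono (Set.self_mem_Ici) (show x ∈ Set.Ici (1:ℝ) from hx) hx
  have hx0 : (0:ℝ) < x := by linarith
  have h1p : (1:ℝ) ^ p = 1 := Real.one_rpow p
  have h1p' : (1:ℝ) ^ (p - 1) = 1 := Real.one_rpow (p - 1)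
  have hxp : x ^ (p - 1) * x = x ^ p := by
    nth_rewrite 2 [← Real.rpow_one x]
    rw [← Real.rpow_add hx0]
    norm_num
  simp only [hf, h1p, h1p'] at hfx
  nlinarith [hfx, hxp]

/-- Case (B2): for `p > 2`, `μ > 1` with `μ ≥ (1/2)(p/(p-1))^{p-1}` and `β̃ ≥ (p-1)μ`,
the system `p·τ^{2p-2} - 2β̃·τ^p = μ(2-p)`, `μ + β̃·τ^p - β̃·τ^{p-2} - τ^{2p-2} = 0`
has no solution `τ ∈ (1, +∞)`. -/
theorem no_solution_B2 (p μ β : ℝ) (hp : 2 < p) (hμ : 1 < μ)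
    (hμ' : (1 / 2) * (p / (p - 1)) ^ (p - 1) ≤ μ) (hβ : (p - 1) * μ ≤ β) :
    ¬ ∃ τ : ℝ, 1 < τ ∧
      p * τ ^ (2 * p - 2) - 2 * β * τ ^ p = μ * (2 - p) ∧
      μ + β * τ ^ p - β * τ ^ (p - 2) - τ ^ (2 * p - 2) = 0 := by
  rintro ⟨τ, hτ, eq1, eq2⟩
  have τ0 : (0:ℝ) < τ := lt_trans one_pos hτ
  set x : ℝ := τ ^ (2:ℝ) with hxdef
  have hx1 : 1 < x := by
    rw [hxdef]
    exact (Real.one_lt_rpow_iff_of_pos τ0).mpr (Or.inl ⟨hτ, two_pos⟩)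
  have hx0 : (0:ℝ) < x := by linarith
  set C : ℝ := τ ^ (p - 2) with hCdef
  have hC : 0 < C := Real.rpow_pos_of_pos τ0 _
  have hB : τ ^ p = C * x := by
    rw [hCdef, hxdef, ← Real.rpow_add τ0]
    norm_num
  have hA : τ ^ (2 * p - 2) = x ^ (p - 1) := by
    rw [hxdef, ← Real.rpow_mul τ0.le]
    congr 1
    ring
  rw [hA, hB] at eq1 eq2
  have hβ0 : 0 < β := by nlinarith
  -- combination of the two equations
  have h3 : β * C * (p - (p - 2) * x) = 2 * (p - 1) * μ := by
    linear_combination (-1) * eq1 - p * eq2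
  have hfacpos : 0 < p - (p - 2) * x := by
    have h2 : 0 < β * C * (p - (p - 2) * x) := by rw [h3]; nlinarith
    rcases mul_pos_iff.mp h2 with ⟨_, h⟩ | ⟨h, _⟩
    · exact h
    · exact absurd (mul_pos hβ0 hC) (by linarith)
  have key : x ^ (p - 1) * (p - (p - 2) * x) = μ * (p * x - (p - 2)) := by
    linear_combination (-(p - (p - 2) * x)) * eq2 + (x - 1) * h3
  have hrhs : 0 < p * x - (p - 2) := by nlinarith
  have hlt : p * x - (p - 2) < μ * (p * x - (p - 2)) := by nlinarith
  have hle := aux_key p hp hx1.le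
  linarith [key ▸ hle]
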